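/- Let σ be the smallest nonzero singular value of I − P₀. Then for every s ∈ [0,1], ‖π_s − π₀‖_TV ≤ 2 s n^{3/2} / σ. -/

import Mathlib

open Matrix BigOperators

/-- A row-stochastic matrix: nonnegative entries, each row sums to 1. -/
def IsStochastic {n : ℕ} (P : Matrix (Fin n) (Fin n) ℝ) : Prop :=
  (∀ i j, 0 ≤ P i j) ∧ ∀ i, ∑ j, P i j = 1

/-- Irreducibility: every state can reach every other state. -/
def MCIrreducible {n : ℕ} (P : Matrix (Fin n) (Fin n) ℝ) : Prop :=
  ∀ i j, ∃ m : ℕ, 0 < (P ^ m) i j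

/-- Aperiodicity (for a finite chain): every state has eventually positive return
probabilities. -/
def MCAperiodic {n : ℕ} (P : Matrix (Fin n) (Fin n) ℝ) : Prop :=
  ∀ i : Fin n, ∃ N : ℕ, ∀ m : ℕ, N ≤ m → 0 < (P ^ m) i i

/-- A probability (row) vector. -/
def IsProbVec {n : ℕ} (v : Fin n → ℝ) : Prop :=
  (∀ i, 0 ≤ v i) ∧ ∑ i, v i = 1

/-- Total variation distance between two vectors. -/
noncomputable def tvDist {n : ℕ} (μ ν : Fin n → ℝ) : ℝ :=
  (1 / 2) * ∑ i, |μ i - ν i|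

/-- Euclidean norm on ℝⁿ. -/
noncomputable def euclNorm {n : ℕ} (v : Fin n → ℝ) : ℝ :=
  Real.sqrt (∑ i, (v i) ^ 2)

/-- Mixing time of `P` with stationary distribution `π`. -/
noncomputable def mixingTime {n : ℕ} (P : Matrix (Fin n) (Fin n) ℝ)
    (π : Fin n → ℝ) (ε : ℝ) : ℕ :=
  sInf {T : ℕ | ∀ ν : Fin n → ℝ, IsProbVec ν → tvDist (ν ᵥ* (P ^ T)) π ≤ ε}

/-- The interpolation `P_t = (1-t)·P₀ + t·P₁`. -/
noncomputable def Pt {n : ℕ} (P₀ P₁ : Matrix (Fin n) (Fin n) ℝ) (t : ℝ) :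
    Matrix (Fin n) (Fin n) ℝ :=
  (1 - t) • P₀ + t • P₁

/-- The ordered product `P_{(j+1)/T} P_{(j+2)/T} ⋯ P_{k/T}` (identity if `j ≥ k`). -/
noncomputable def prodSeg {n : ℕ} (P₀ P₁ : Matrix (Fin n) (Fin n) ℝ) (T j k : ℕ) :
    Matrix (Fin n) (Fin n) ℝ :=
  ((List.range (k - j)).map (fun i => Pt P₀ P₁ (((j : ℝ) + (i : ℝ) + 1) / (T : ℝ)))).prod

/-- The ordered product `P_{1/T} P_{2/T} ⋯ P_{k/T}`. -/
noncomputable def adiabProd {n : ℕ} (P₀ P₁ : Matrix (Fin n) (Fin n) ℝ) (T k : ℕ) :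
    Matrix (Fin n) (Fin n) ℝ :=
  prodSeg P₀ P₁ T 0 k

/-- Adiabatic time of the adiabatic evolution between `P₀` and `P₁`,
with `π₁` the stationary distribution of `P₁`. -/
noncomputable def adiabaticTime {n : ℕ} (P₀ P₁ : Matrix (Fin n) (Fin n) ℝ)
    (π₁ : Fin n → ℝ) (ε : ℝ) : ℕ :=
  sInf {T' : ℕ | ∀ T : ℕ, T' ≤ T → ∀ ν : Fin n → ℝ, IsProbVec ν →
    tvDist ((ν ᵥ* P₀) ᵥ* adiabProd P₀ P₁ T T) π₁ ≤ ε}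

/-- Stable adiabatic time, where `π s` is the stationary distribution of `P_s`. -/
noncomputable def stableAdiabaticTime {n : ℕ} (P₀ P₁ : Matrix (Fin n) (Fin n) ℝ)
    (π : ℝ → Fin n → ℝ) (ε : ℝ) : ℕ :=
  sInf {T : ℕ | ∀ k : ℕ, 1 ≤ k → k ≤ T →
    tvDist ((π 0) ᵥ* adiabProd P₀ P₁ T k) (π ((k : ℝ) / (T : ℝ))) < ε}

/-- `t_mix(ε) = sup_{s ∈ [0,1]} t_mix(P_s, ε)`, where `π s` is the stationary
distribution of `P_s`. -/
noncomputable def maxMixingTime {n : ℕ} (P₀ P₁ : Matrix (Fin n) (Fin n) ℝ)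
    (π : ℝ → Fin n → ℝ) (ε : ℝ) : ℕ :=
  sSup {m : ℕ | ∃ s ∈ Set.Icc (0 : ℝ) 1, m = mixingTime (Pt P₀ P₁ s) (π s) ε}

/-- `s` is a singular value of `A`: `s ≥ 0` and `s²` is an eigenvalue of `A Aᵀ`
(for a left eigenvector). -/
def IsSingularValue {n : ℕ} (A : Matrix (Fin n) (Fin n) ℝ) (s : ℝ) : Prop :=
  0 ≤ s ∧ ∃ v : Fin n → ℝ, v ≠ 0 ∧ v ᵥ* (A * Aᵀ) = (s ^ 2) • v

/-- `σ` is the smallest nonzero (positive) singular value of `A`. -/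
def IsSmallestPosSingularValue {n : ℕ} (A : Matrix (Fin n) (Fin n) ℝ) (σ : ℝ) : Prop :=
  0 < σ ∧ IsSingularValue A σ ∧ ∀ s : ℝ, 0 < s → IsSingularValue A s → σ ≤ s

lemma aux_pow_stoch {n : ℕ} {P : Matrix (Fin n) (Fin n) ℝ} (hP : IsStochastic P) (m : ℕ) :
    IsStochastic (P ^ m) := by
  induction m with
  | zero =>
    constructor
    · intro i j; simp [Matrix.one_apply]; split <;> norm_num
    · intro i; simp [Matrix.one_apply]
  | succ m ih =>
    rw [pow_succ]
    constructor
    · intro i j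
      rw [Matrix.mul_apply]
      exact Finset.sum_nonneg fun k _ => mul_nonneg (ih.1 i k) (hP.1 k j)
    · intro i
      simp only [Matrix.mul_apply]
      rw [Finset.sum_comm]
      calc ∑ k, ∑ j, (P ^ m) i k * P k j = ∑ k, (P ^ m) i k * ∑ j, P k j := by
            simp [Finset.mul_sum]
        _ = 1 := by simp [hP.2, ih.2 i]

lemma aux_entry_le_one {n : ℕ} {P : Matrix (Fin n) (Fin n) ℝ} (hP : IsStochastic P) (i j : Fin n) :
    P i j ≤ 1 := by
  calc P i j ≤ ∑ k, P i k := Finset.single_le_sum (fun k _ => hP.1 i k) (Finset.mem_univ j)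
    _ = 1 := hP.2 i

lemma aux_pos_pow {n : ℕ} {P : Matrix (Fin n) (Fin n) ℝ} (hP : IsStochastic P)
    (hi : MCIrreducible P) (ha : MCAperiodic P) : ∃ M : ℕ, ∀ i j, 0 < (P ^ M) i j := by
  choose m hm using hi
  choose N hN using ha
  set B := Finset.univ.sup (fun p : Fin n × Fin n => m p.1 p.2) with hB
  set C := Finset.univ.sup N with hC
  refine ⟨B + C, fun i j => ?_⟩
  have hmB : m i j ≤ B := Finset.le_sup (f := fun p : Fin n × Fin n => m p.1 p.2)
    (Finset.mem_univ (i, j))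
  have hNC : N j ≤ C := Finset.le_sup (Finset.mem_univ j)
  have hsplit : P ^ (B + C) = P ^ (m i j) * P ^ (B + C - m i j) := by
    rw [← pow_add]
    congr 1
    omega
  rw [hsplit, Matrix.mul_apply]
  have h1 : 0 < (P ^ (m i j)) i j * (P ^ (B + C - m i j)) j j := by
    apply mul_pos (hm i j)
    exact hN j _ (by omega)
  refine Finset.sum_pos' (fun k _ => ?_) ⟨j, Finset.mem_univ j, h1⟩
  exact mul_nonneg ((aux_pow_stoch hP _).1 i k) ((aux_pow_stoch hP _).1 k j)

lemma aux_fix_pow {n : ℕ} {P : Matrix (Fin n) (Fin n) ℝ} {x : Fin n → ℝ}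
    (hx : x ᵥ* P = x) (m : ℕ) : x ᵥ* (P ^ m) = x := by
  induction m with
  | zero => simp
  | succ m ih => rw [pow_succ, ← Matrix.vecMul_vecMul, ih, hx]

lemma aux_ker {n : ℕ} {P : Matrix (Fin n) (Fin n) ℝ} (hP : IsStochastic P)
    {M : ℕ} (hpos : ∀ i j, 0 < (P ^ M) i j)
    {x : Fin n → ℝ} (hx : x ᵥ* P = x) (hsum : ∑ i, x i = 0) : x = 0 := by
  by_contra hne
  set Q := P ^ M with hQdef
  have hQ : IsStochastic Q := aux_pow_stoch hP M
  have hfix : x ᵥ* Q = x := aux_fix_pow hx M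
  -- find positive and negative entries
  obtain ⟨i₀, hi₀⟩ : ∃ i, x i ≠ 0 := by
    by_contra h; push_neg at h; exact hne (funext h)
  have hpos' : ∃ i, 0 < x i := by
    by_contra h; push_neg at h
    have : ∑ i, x i < ∑ i : Fin n, (0 : ℝ) :=
      Finset.sum_lt_sum (fun i _ => h i) ⟨i₀, Finset.mem_univ i₀, lt_of_le_of_ne (h i₀) hi₀⟩
    simp [hsum] at this
  have hneg' : ∃ i, x i < 0 := by
    by_contra h; push_neg at h
    have : ∑ i : Fin n, (0:ℝ) < ∑ i, x i :=
      Finset.sum_lt_sum (fun i _ => h i) ⟨i₀, Finset.mem_univ i₀, lt_of_le_of_ne (h i₀) (Ne.symm hi₀)⟩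
    simp [hsum] at this
  obtain ⟨ip, hip⟩ := hpos'
  obtain ⟨im, him⟩ := hneg'
  -- ℓ¹ equality
  have habs : ∀ j, |x j| ≤ ∑ i, |x i| * Q i j := by
    intro j
    have : x j = ∑ i, x i * Q i j := by
      conv_lhs => rw [← hfix]
      simp [Matrix.vecMul, dotProduct]
    rw [this]
    refine (Finset.abs_sum_le_sum_abs _ _).trans ?_
    apply le_of_eq
    refine Finset.sum_congr rfl fun i _ => ?_
    rw [abs_mul, abs_of_nonneg (hQ.1 i j)]
  have hsumeq : ∑ j, (∑ i, |x i| * Q i j) = ∑ j, |x j| := by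
    rw [Finset.sum_comm]
    refine Finset.sum_congr rfl fun i _ => ?_
    rw [← Finset.mul_sum, hQ.2 i, mul_one]
  have heq : ∀ j, (∑ i, |x i| * Q i j) - |x j| = 0 := by
    have h0 : ∑ j, ((∑ i, |x i| * Q i j) - |x j|) = 0 := by
      rw [Finset.sum_sub_distrib, hsumeq, sub_self]
    intro j
    exact (Finset.sum_eq_zero_iff_of_nonneg (fun j _ => sub_nonneg.2 (habs j))).1 h0 j
      (Finset.mem_univ j)
  -- work at column j = ip
  set j := ip
  have hxj : x j = ∑ i, x i * Q i j := by
    conv_lhs => rw [← hfix]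
    simp [Matrix.vecMul, dotProduct]
  have heqj : |x j| = ∑ i, |x i| * Q i j := by linarith [heq j]
  have hap : 0 < x ip * Q ip j := mul_pos hip (hpos ip j)
  have ham : x im * Q im j < 0 := mul_neg_of_neg_of_pos him (hpos im j)
  rcases le_or_gt 0 (x j) with hsgn | hsgn
  · -- ∑ a ≥ 0 : each |a_i| = a_i, contradiction at im
    have h0 : ∑ i, (|x i| * Q i j - x i * Q i j) = 0 := by
      rw [Finset.sum_sub_distrib, ← heqj, abs_of_nonneg hsgn, ← hxj, sub_self]
    have := (Finset.sum_eq_zero_iff_of_nonneg (fun i _ => by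
      have : x i * Q i j ≤ |x i| * Q i j :=
        mul_le_mul_of_nonneg_right (le_abs_self _) (le_of_lt (hpos i j))
      linarith)).1 h0 im (Finset.mem_univ im)
    have : x im * Q im j = |x im| * Q im j := by linarith
    nlinarith [abs_nonneg (x im), hpos im j]
  · have h0 : ∑ i, (|x i| * Q i j + x i * Q i j) = 0 := by
      rw [Finset.sum_add_distrib, ← heqj, abs_of_neg hsgn, ← hxj]; ring
    have := (Finset.sum_eq_zero_iff_of_nonneg (fun i _ => by
      have : -(x i * Q i j) ≤ |x i| * Q i j :=
        (neg_mul (x i) (Q i j)) ▸ mul_le_mul_of_nonneg_right (neg_le_abs _) (le_of_lt (hpos i j))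
      linarith)).1 h0 ip (Finset.mem_univ ip)
    nlinarith [abs_nonneg (x ip), hpos ip j]

lemma aux_qf {n : ℕ} (A : Matrix (Fin n) (Fin n) ℝ) (x : Fin n → ℝ) :
    x ᵥ* (A * Aᵀ) ⬝ᵥ x = (x ᵥ* A) ⬝ᵥ (x ᵥ* A) := by
  rw [← Matrix.vecMul_vecMul, Matrix.vecMul_transpose,
    dotProduct_comm, Matrix.dotProduct_mulVec]

lemma aux_dot_self_nonneg {n : ℕ} (x : Fin n → ℝ) : 0 ≤ x ⬝ᵥ x :=
  Finset.sum_nonneg fun i _ => mul_self_nonneg (x i)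

lemma aux_spec {n : ℕ} (A : Matrix (Fin n) (Fin n) ℝ) (σ : ℝ)
    (hσ : IsSmallestPosSingularValue A σ) (u : Fin n → ℝ)
    (hu : ∀ x : Fin n → ℝ, x ᵥ* A = 0 → x ⬝ᵥ u = 0) :
    σ ^ 2 * (u ⬝ᵥ u) ≤ (u ᵥ* A) ⬝ᵥ (u ᵥ* A) := by
  have hAH : Aᴴ = Aᵀ := Matrix.conjTranspose_eq_transpose_of_trivial A
  have hM : (A * Aᵀ).IsHermitian := by
    rw [← hAH]; exact Matrix.isHermitian_mul_conjTranspose_self A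
  set M := A * Aᵀ with hMdef
  set U : Matrix (Fin n) (Fin n) ℝ :=
    (Matrix.IsHermitian.eigenvectorUnitary hM : Matrix (Fin n) (Fin n) ℝ) with hU
  set μ : Fin n → ℝ := hM.eigenvalues with hμ
  have hstarU : star U = Uᵀ := by
    ext i j; simp [Matrix.star_apply]
  have hUU : U * Uᵀ = 1 := by
    rw [← hstarU]
    exact (Matrix.mem_unitaryGroup_iff).mp (Matrix.IsHermitian.eigenvectorUnitary hM).2
  have hUtU : Uᵀ * U = 1 := by
    rw [← hstarU]
    exact (Matrix.mem_unitaryGroup_iff').mp (Matrix.IsHermitian.eigenvectorUnitary hM).2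
  set e : Fin n → (Fin n → ℝ) := fun k i => U i k with he
  have hecol : ∀ k, e k = ⇑(hM.eigenvectorBasis k) := by
    intro k; funext i
    exact Matrix.IsHermitian.eigenvectorUnitary_apply hM i k
  have heig : ∀ k, M *ᵥ e k = μ k • e k := by
    intro k; rw [hecol k]
    exact hM.mulVec_eigenvectorBasis k
  have hMsymm : Mᵀ = M := by
    rw [hMdef, Matrix.transpose_mul, Matrix.transpose_transpose]
  have heigL : ∀ k, e k ᵥ* M = μ k • e k := by
    intro k
    rw [← hMsymm, Matrix.vecMul_transpose, heig]
  have hdot : ∀ k, e k ⬝ᵥ e k = 1 := by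
    intro k
    have : (Uᵀ * U) k k = (1 : Matrix (Fin n) (Fin n) ℝ) k k := by rw [hUtU]
    simpa [Matrix.mul_apply, Matrix.one_apply, dotProduct, he,
      Matrix.transpose_apply] using this
  have hene : ∀ k, e k ≠ 0 := by
    intro k hk
    have := hdot k
    rw [hk] at this
    simp at this
  -- the quadratic form of e k
  have hqf_e : ∀ k, (e k ᵥ* A) ⬝ᵥ (e k ᵥ* A) = μ k := by
    intro k
    rw [← aux_qf, heigL k, smul_dotProduct, hdot k, smul_eq_mul, mul_one]
  have hμnn : ∀ k, 0 ≤ μ k := fun k => (hqf_e k) ▸ aux_dot_self_nonneg _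
  have hσle : ∀ k, μ k ≠ 0 → σ ^ 2 ≤ μ k := by
    intro k hk
    have hkpos : 0 < μ k := lt_of_le_of_ne (hμnn k) (Ne.symm hk)
    have hsv : IsSingularValue A (Real.sqrt (μ k)) := by
      refine ⟨Real.sqrt_nonneg _, e k, hene k, ?_⟩
      rw [Real.sq_sqrt (hμnn k)]
      exact heigL k
    have h1 : σ ≤ Real.sqrt (μ k) := hσ.2.2 _ (Real.sqrt_pos.mpr hkpos) hsv
    calc σ ^ 2 ≤ Real.sqrt (μ k) ^ 2 := by
          have := hσ.1; nlinarith
      _ = μ k := Real.sq_sqrt (hμnn k)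
  -- coordinates of u
  set y : Fin n → ℝ := u ᵥ* U with hy
  have hyy : y ⬝ᵥ y = u ⬝ᵥ u := by
    have h1 : y = Uᵀ *ᵥ u := by
      rw [hy, ← Matrix.vecMul_transpose, Matrix.transpose_transpose]
    calc y ⬝ᵥ y = y ⬝ᵥ (Uᵀ *ᵥ u) := by rw [← h1]
      _ = (y ᵥ* Uᵀ) ⬝ᵥ u := by rw [Matrix.dotProduct_mulVec]
      _ = (u ᵥ* (U * Uᵀ)) ⬝ᵥ u := by rw [hy, Matrix.vecMul_vecMul]
      _ = u ⬝ᵥ u := by rw [hUU, Matrix.vecMul_one]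
  have hyk0 : ∀ k, μ k = 0 → y k = 0 := by
    intro k hk
    have h1 : e k ᵥ* A = 0 := by
      have h2 : (e k ᵥ* A) ⬝ᵥ (e k ᵥ* A) = 0 := by rw [hqf_e k, hk]
      exact dotProduct_self_eq_zero.mp h2
    have h3 : e k ⬝ᵥ u = 0 := hu (e k) h1
    calc y k = u ⬝ᵥ e k := by
          simp [hy, Matrix.vecMul, dotProduct, he]
      _ = 0 := by rw [dotProduct_comm]; exact h3
  -- spectral decomposition of the quadratic form
  have hdiag : Matrix.diagonal (RCLike.ofReal ∘ μ) = Matrix.diagonal μ := by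
    congr 1
  have hspec : M = U * Matrix.diagonal μ * Uᵀ := by
    rw [← hdiag, ← hstarU]
    exact hM.spectral_theorem
  have hqf_u : (u ᵥ* A) ⬝ᵥ (u ᵥ* A) = ∑ k, μ k * (y k) ^ 2 := by
    rw [← aux_qf, ← hMdef, hspec]
    have h1 : u ᵥ* (U * Matrix.diagonal μ * Uᵀ) = (y ᵥ* Matrix.diagonal μ) ᵥ* Uᵀ := by
      rw [← Matrix.vecMul_vecMul, ← Matrix.vecMul_vecMul]
    rw [h1, Matrix.vecMul_transpose]
    rw [dotProduct_comm, Matrix.dotProduct_mulVec, hy]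
    simp only [← hy]
    rw [dotProduct]
    refine Finset.sum_congr rfl fun k _ => ?_
    rw [Matrix.vecMul_diagonal]
    ring
  rw [hqf_u, ← hyy, dotProduct, Finset.mul_sum]
  refine Finset.sum_le_sum fun k _ => ?_
  rcases eq_or_ne (μ k) 0 with h | h
  · rw [hyk0 k h, h]; ring_nf; rfl
  · have := hσle k h
    nlinarith [sq_nonneg (y k)]

lemma aux_vecMul_smulmat {n : ℕ} (x : Fin n → ℝ) (c : ℝ) (B : Matrix (Fin n) (Fin n) ℝ) :
    x ᵥ* (c • B) = c • (x ᵥ* B) := by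
  funext j
  simp [Matrix.vecMul, dotProduct, Finset.mul_sum, mul_left_comm]


/-- With σ the smallest nonzero singular value of I − P₀, for every
s ∈ [0,1], `‖π_s − π₀‖_TV ≤ 2 s n^{3/2} / σ`. -/
theorem stmt_9 {n : ℕ} (hn : 1 ≤ n) (P₀ P₁ : Matrix (Fin n) (Fin n) ℝ)
    (hP₀ : IsStochastic P₀) (hP₀i : MCIrreducible P₀) (hP₀a : MCAperiodic P₀)
    (hP₁ : IsStochastic P₁) (hP₁i : MCIrreducible P₁) (hP₁a : MCAperiodic P₁)
    (π : ℝ → Fin n → ℝ)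
    (hπ : ∀ t ∈ Set.Icc (0 : ℝ) 1, IsProbVec (π t) ∧ (π t) ᵥ* (Pt P₀ P₁ t) = π t)
    (σ : ℝ) (hσ : IsSmallestPosSingularValue (1 - P₀) σ)
    (s : ℝ) (hs : s ∈ Set.Icc (0 : ℝ) 1) :
    tvDist (π s) (π 0) ≤ 2 * s * (n : ℝ) ^ ((3 : ℝ) / 2) / σ := by
  obtain ⟨hs0, hs1⟩ := hs
  have hσpos : 0 < σ := hσ.1
  obtain ⟨hprob0, hfix0'⟩ := hπ 0 ⟨le_refl 0, by norm_num⟩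
  obtain ⟨hprobs, hfixs⟩ := hπ s ⟨hs0, hs1⟩
  have hPt0 : Pt P₀ P₁ 0 = P₀ := by simp [Pt]
  have hfix0 : (π 0) ᵥ* P₀ = π 0 := by rw [← hPt0]; exact hfix0'
  set p : Fin n → ℝ := π 0 with hpdef
  set A : Matrix (Fin n) (Fin n) ℝ := 1 - P₀ with hAdef
  obtain ⟨M, hposM⟩ := aux_pos_pow hP₀ hP₀i hP₀a
  -- span of left kernel
  have hspan : ∀ x : Fin n → ℝ, x ᵥ* P₀ = x → x = (∑ i, x i) • p := by
    intro x hx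
    have h1 : (x - (∑ i, x i) • p) ᵥ* P₀ = x - (∑ i, x i) • p := by
      rw [Matrix.sub_vecMul, Matrix.smul_vecMul, hx, hfix0]
    have h2 : ∑ i, (x - (∑ i, x i) • p) i = 0 := by
      simp only [Pi.sub_apply, Pi.smul_apply, smul_eq_mul, Finset.sum_sub_distrib,
        ← Finset.mul_sum, hprob0.2, mul_one, sub_self]
    exact sub_eq_zero.mp (aux_ker hP₀ hposM h1 h2)
  have hAker : ∀ x : Fin n → ℝ, x ᵥ* A = 0 → x ᵥ* P₀ = x := by
    intro x hx
    rw [hAdef, Matrix.vecMul_sub, Matrix.vecMul_one] at hx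
    exact (sub_eq_zero.mp hx).symm
  have hpA : p ᵥ* A = 0 := by
    rw [hAdef, Matrix.vecMul_sub, Matrix.vecMul_one, hfix0, sub_self]
  set v : Fin n → ℝ := π s - p with hvdef
  set w : Fin n → ℝ := v ᵥ* A with hwdef
  -- the residual identity
  have hw : w = s • ((π s) ᵥ* (P₁ - P₀)) := by
    have h1 : w = π s - (π s) ᵥ* P₀ := by
      rw [hwdef, hvdef, Matrix.sub_vecMul, hpA, sub_zero, hAdef,
        Matrix.vecMul_sub, Matrix.vecMul_one]
    have h2 : (1 - s) • ((π s) ᵥ* P₀) + s • ((π s) ᵥ* P₁) = π s := by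
      rw [← aux_vecMul_smulmat, ← aux_vecMul_smulmat, ← Matrix.vecMul_add]
      exact hfixs
    rw [h1, Matrix.vecMul_sub]
    have h3 : (1 - s) • ((π s) ᵥ* P₀) = (π s) ᵥ* P₀ - s • ((π s) ᵥ* P₀) := by
      rw [sub_smul, one_smul]
    rw [h3] at h2
    rw [smul_sub]
    funext j
    have := congrFun h2 j
    simp only [Pi.add_apply, Pi.sub_apply, Pi.smul_apply, smul_eq_mul] at this ⊢
    linarith
  -- entrywise bound on w
  have hwent : ∀ j, |w j| ≤ s := by
    intro j
    rw [hw]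
    have h1 : |((π s) ᵥ* (P₁ - P₀)) j| ≤ 1 := by
      have : ((π s) ᵥ* (P₁ - P₀)) j = ∑ i, π s i * (P₁ i j - P₀ i j) := by
        simp [Matrix.vecMul, dotProduct, Matrix.sub_apply]
      rw [this]
      calc |∑ i, π s i * (P₁ i j - P₀ i j)| ≤ ∑ i, |π s i * (P₁ i j - P₀ i j)| :=
            Finset.abs_sum_le_sum_abs _ _
        _ ≤ ∑ i, π s i := by
            refine Finset.sum_le_sum fun i _ => ?_
            rw [abs_mul, abs_of_nonneg (hprobs.1 i)]
            have h2 : |P₁ i j - P₀ i j| ≤ 1 := by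
              rw [abs_sub_le_iff]
              constructor <;> nlinarith [hP₀.1 i j, hP₁.1 i j,
                aux_entry_le_one hP₀ i j, aux_entry_le_one hP₁ i j]
            nlinarith [hprobs.1 i]
        _ = 1 := hprobs.2
    simp only [Pi.smul_apply, smul_eq_mul, abs_mul, abs_of_nonneg hs0]
    nlinarith
  have hwbound : w ⬝ᵥ w ≤ (n : ℝ) * s ^ 2 := by
    rw [dotProduct]
    calc ∑ j, w j * w j ≤ ∑ j : Fin n, s ^ 2 := by
          refine Finset.sum_le_sum fun j _ => ?_
          have := hwent j
          nlinarith [abs_nonneg (w j), abs_mul_abs_self (w j)]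
      _ = (n : ℝ) * s ^ 2 := by
          rw [Finset.sum_const, Finset.card_univ, Fintype.card_fin, nsmul_eq_mul]
  -- orthogonal decomposition
  have hppne : p ⬝ᵥ p ≠ 0 := by
    intro h
    have hp0 : p = 0 := dotProduct_self_eq_zero.mp h
    have hsum1 : ∑ i, p i = 1 := hprob0.2
    rw [hp0] at hsum1
    simp at hsum1
  have hpp : 0 < p ⬝ᵥ p := lt_of_le_of_ne (aux_dot_self_nonneg p) (Ne.symm hppne)
  set c : ℝ := (v ⬝ᵥ p) / (p ⬝ᵥ p) with hcdef
  set u : Fin n → ℝ := v - c • p with hudef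
  have hup : u ⬝ᵥ p = 0 := by
    rw [hudef, sub_dotProduct, smul_dotProduct, hcdef, smul_eq_mul,
      div_mul_cancel₀ _ hppne, sub_self]
  have huorth : ∀ x : Fin n → ℝ, x ᵥ* A = 0 → x ⬝ᵥ u = 0 := by
    intro x hx
    rw [hspan x (hAker x hx), smul_dotProduct, smul_eq_mul,
      dotProduct_comm, hup, mul_zero]
  have huA : u ᵥ* A = w := by
    rw [hudef, Matrix.sub_vecMul, Matrix.smul_vecMul, hpA, smul_zero, sub_zero]
  have hkey : σ ^ 2 * (u ⬝ᵥ u) ≤ (n : ℝ) * s ^ 2 := by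
    have := aux_spec A σ hσ u huorth
    rw [huA] at this
    linarith [hwbound]
  have huu : u ⬝ᵥ u ≤ (n : ℝ) * s ^ 2 / σ ^ 2 := by
    rw [le_div_iff₀ (by positivity)]
    linarith
  -- sums
  have hsumv : ∑ i, v i = 0 := by
    simp only [hvdef, Pi.sub_apply, Finset.sum_sub_distrib, hprobs.2, hprob0.2, sub_self]
  have hsumu : ∑ i, u i = -c := by
    have : ∑ i, u i = ∑ i, v i - c * ∑ i, p i := by
      simp only [hudef, Pi.sub_apply, Pi.smul_apply, smul_eq_mul, Finset.sum_sub_distrib,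
        ← Finset.mul_sum]
    rw [this, hsumv, hprob0.2, mul_one, zero_sub]
  -- Cauchy-Schwarz: ∑ |u i| ≤ √(n * (u ⬝ᵥ u))
  have hcs : ∑ i, |u i| ≤ Real.sqrt ((n : ℝ) * (u ⬝ᵥ u)) := by
    rw [show ((n:ℝ) * (u ⬝ᵥ u)) = (n : ℝ) * ∑ i, |u i| ^ 2 by
      rw [dotProduct]; congr 1; exact Finset.sum_congr rfl fun i _ => by
        rw [sq_abs]; ring]
    apply Real.le_sqrt_of_sq_le
    have := sq_sum_le_card_mul_sum_sq (s := Finset.univ) (f := fun i => |u i|)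
    simpa using this
  have hcabs : |c| ≤ Real.sqrt ((n : ℝ) * (u ⬝ᵥ u)) := by
    have h1 : |c| = |∑ i, u i| := by rw [hsumu, abs_neg]
    rw [h1]
    exact (Finset.abs_sum_le_sum_abs _ _).trans hcs
  -- ℓ¹ bound on v
  have hl1 : ∑ i, |v i| ≤ 2 * Real.sqrt ((n : ℝ) * (u ⬝ᵥ u)) := by
    have h1 : ∀ i, |v i| ≤ |u i| + |c| * p i := by
      intro i
      have : v i = u i + c * p i := by simp [hudef]
      rw [this]
      calc |u i + c * p i| ≤ |u i| + |c * p i| := abs_add_le _ _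
        _ = |u i| + |c| * p i := by rw [abs_mul, abs_of_nonneg (hprob0.1 i)]
    calc ∑ i, |v i| ≤ ∑ i, (|u i| + |c| * p i) := Finset.sum_le_sum fun i _ => h1 i
      _ = (∑ i, |u i|) + |c| := by
          rw [Finset.sum_add_distrib, ← Finset.mul_sum, hprob0.2, mul_one]
      _ ≤ 2 * Real.sqrt ((n : ℝ) * (u ⬝ᵥ u)) := by linarith
  -- final numeric chain
  have hsqrt : Real.sqrt ((n : ℝ) * (u ⬝ᵥ u)) ≤ (n : ℝ) * s / σ := by
    have h1 : (n : ℝ) * (u ⬝ᵥ u) ≤ ((n : ℝ) * s / σ) ^ 2 := by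
      have hn0 : (0:ℝ) ≤ (n:ℝ) := Nat.cast_nonneg n
      calc (n : ℝ) * (u ⬝ᵥ u) ≤ (n : ℝ) * ((n : ℝ) * s ^ 2 / σ ^ 2) := by
            nlinarith [huu]
        _ = ((n : ℝ) * s / σ) ^ 2 := by field_simp
    calc Real.sqrt ((n : ℝ) * (u ⬝ᵥ u)) ≤ Real.sqrt (((n : ℝ) * s / σ) ^ 2) :=
          Real.sqrt_le_sqrt h1
      _ = (n : ℝ) * s / σ := by
          rw [Real.sqrt_sq (by positivity)]
  have hrpow : (n : ℝ) ≤ (n : ℝ) ^ ((3 : ℝ) / 2) := by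
    have h1 : (1:ℝ) ≤ (n : ℝ) := by exact_mod_cast hn
    calc (n : ℝ) = (n : ℝ) ^ (1 : ℝ) := (Real.rpow_one _).symm
      _ ≤ (n : ℝ) ^ ((3 : ℝ) / 2) := Real.rpow_le_rpow_of_exponent_le h1 (by norm_num)
  have hfinal : (n : ℝ) * s / σ ≤ 2 * s * (n : ℝ) ^ ((3 : ℝ) / 2) / σ := by
    have h2 : 0 ≤ s * (n : ℝ) ^ ((3 : ℝ) / 2) :=
      mul_nonneg hs0 (Real.rpow_nonneg (Nat.cast_nonneg n) _)
    have h3 : s * (n : ℝ) ≤ s * (n : ℝ) ^ ((3 : ℝ) / 2) :=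
      mul_le_mul_of_nonneg_left hrpow hs0
    rw [div_le_div_iff_of_pos_right hσpos]
    nlinarith
  calc tvDist (π s) (π 0) = (1/2) * ∑ i, |v i| := by rw [tvDist]; rfl
    _ ≤ (1/2) * (2 * Real.sqrt ((n : ℝ) * (u ⬝ᵥ u))) := by linarith
    _ = Real.sqrt ((n : ℝ) * (u ⬝ᵥ u)) := by ring
    _ ≤ (n : ℝ) * s / σ := hsqrt
    _ ≤ 2 * s * (n : ℝ) ^ ((3 : ℝ) / 2) / σ := hfinal
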